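/- Let q be a prime power and μ an integer with 0 ≤ μ ≤ q−2. Then the F-linear span of { (c_i d_i^q)_{i=1}^{q²} : c, d ∈ C^(q²,μ) } equals the F-linear span of { G_{i+qj} : 0 ≤ i ≤ μ, 0 ≤ j ≤ μ }. -/

import Mathlib

/-- Equation (15): for `0 ≤ μ ≤ q - 2`, the `F`-linear span of the vectors
`(c i * (d i)^q)_i` for `c, d ∈ C^(q²,μ)` equals the `F`-linear span of the
vectors `G_(i+q·j)` for `0 ≤ i, j ≤ μ`. -/
theorem span_hermitian_products_C_q2_mu
    (q : ℕ) (hq : IsPrimePow q)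
    (F : Type*) [Field F] [Fintype F] (hF : Fintype.card F = q ^ 2)
    (α : Fˣ) (hα : ∀ x : Fˣ, x ∈ Subgroup.zpowers α)
    (μ : ℕ) (hμ : μ ≤ q - 2)
    (G : ℕ → Fin (q ^ 2) → F)
    (hG : ∀ i : ℕ, ∀ l : Fin (q ^ 2), G i l =
      if (l : ℕ) = q ^ 2 - 1 then (if i = 0 then 1 else 0)
      else (α : F) ^ (i * (l : ℕ)))
    (C : Submodule F (Fin (q ^ 2) → F))
    (hC : C = Submodule.span F {g : Fin (q ^ 2) → F | ∃ i ≤ μ, g = G i}) :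
    Submodule.span F
        {g : Fin (q ^ 2) → F | ∃ c ∈ C, ∃ d ∈ C, g = fun l => c l * (d l) ^ q}
      = Submodule.span F
        {g : Fin (q ^ 2) → F | ∃ i ≤ μ, ∃ j ≤ μ, g = G (i + q * j)} := by
  obtain ⟨p, k, hp, hk, hpk⟩ := hq
  have hp' : p.Prime := Nat.prime_iff.mpr hp
  have hq0 : 0 < q := hpk ▸ (Nat.pow_pos (n := k) hp'.pos : 0 < p ^ k)
  -- characteristic of F is p
  haveI : CharP F (ringChar F) := ringChar.charP F
  obtain ⟨n, hrp, hcard⟩ := FiniteField.card F (ringChar F)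
  have hpr : ringChar F = p := by
    have hdvd : p ∣ ringChar F ^ (n : ℕ) := by
      rw [← hcard, hF, ← hpk]
      exact dvd_pow (dvd_pow_self p hk.ne') two_ne_zero
    exact ((Nat.prime_dvd_prime_iff_eq hp' hrp).mp (hp'.dvd_of_dvd_pow hdvd)).symm
  haveI hcp : CharP F p := hpr ▸ ringChar.charP F
  haveI : Fact p.Prime := ⟨hp'⟩
  haveI : ExpChar F p := ExpChar.prime hp'
  have hfrob : ∀ x y : F, (x + y) ^ q = x ^ q + y ^ q := by
    intro x y
    rw [← hpk]
    exact add_pow_char_pow x y p k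
  -- the key pointwise identity
  have hkey : ∀ i j : ℕ, (fun l => G i l * (G j l) ^ q) = G (i + q * j) := by
    intro i j
    funext l
    rw [hG, hG, hG]
    by_cases h : (l : ℕ) = q ^ 2 - 1
    · simp only [if_pos h]
      by_cases hi : i = 0 <;> by_cases hj : j = 0
      · simp [hi, hj]
      · have h0 : i + q * j ≠ 0 := by
          intro hc
          obtain ⟨-, hqj⟩ := Nat.add_eq_zero.mp hc
          rcases Nat.mul_eq_zero.mp hqj with h' | h'
          · exact hq0.ne' h'
          · exact hj h'
        simp [hi, hj, h0, hq0.ne', zero_pow hq0.ne']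
      · have h0 : i + q * j ≠ 0 := by
          intro hc
          exact hi (Nat.add_eq_zero.mp hc).1
        simp [hi, hj, h0, hq0.ne', zero_pow hq0.ne']
      · have h0 : i + q * j ≠ 0 := by
          intro hc
          exact hi (Nat.add_eq_zero.mp hc).1
        simp [hi, hj, h0, hq0.ne', zero_pow hq0.ne']
    · simp only [if_neg h]
      rw [← pow_mul, ← pow_add]
      congr 1
      ring
  apply le_antisymm
  · rw [Submodule.span_le]
    rintro g ⟨c, hc, d, hd, rfl⟩
    rw [hC] at hc hd
    induction hc using Submodule.span_induction with
    | mem c hcmem =>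
      obtain ⟨i, hi, rfl⟩ := hcmem
      induction hd using Submodule.span_induction with
      | mem d hdmem =>
        obtain ⟨j, hj, rfl⟩ := hdmem
        rw [hkey i j]
        exact Submodule.subset_span ⟨i, hi, j, hj, rfl⟩
      | zero =>
        have : (fun l => G i l * (0 : Fin (q ^ 2) → F) l ^ q) = 0 := by
          funext l; simp [zero_pow hq0.ne']
        rw [this]; exact Submodule.zero_mem _
      | add d1 d2 _ _ h1 h2 =>
        have : (fun l => G i l * (d1 + d2) l ^ q)
            = (fun l => G i l * d1 l ^ q) + (fun l => G i l * d2 l ^ q) := by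
          funext l
          simp only [Pi.add_apply]
          rw [hfrob, mul_add]
        rw [this]; exact Submodule.add_mem _ h1 h2
      | smul a d _ h =>
        have : (fun l => G i l * (a • d) l ^ q)
            = (a ^ q) • (fun l => G i l * d l ^ q) := by
          funext l
          simp only [Pi.smul_apply, smul_eq_mul, mul_pow]
          ring
        rw [this]; exact Submodule.smul_mem _ _ h
    | zero =>
      have : (fun l => (0 : Fin (q ^ 2) → F) l * d l ^ q) = 0 := by
        funext l; simp
      rw [this]; exact Submodule.zero_mem _
    | add c1 c2 _ _ h1 h2 =>
      have : (fun l => (c1 + c2) l * d l ^ q)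
          = (fun l => c1 l * d l ^ q) + (fun l => c2 l * d l ^ q) := by
        funext l; simp [add_mul]
      rw [this]; exact Submodule.add_mem _ h1 h2
    | smul a c _ h =>
      have : (fun l => (a • c) l * d l ^ q) = a • (fun l => c l * d l ^ q) := by
        funext l; simp [mul_assoc]
      rw [this]; exact Submodule.smul_mem _ _ h
  · rw [Submodule.span_le]
    rintro g ⟨i, hi, j, hj, rfl⟩
    apply Submodule.subset_span
    refine ⟨G i, ?_, G j, ?_, (hkey i j).symm⟩
    · rw [hC]; exact Submodule.subset_span ⟨i, hi, rfl⟩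
    · rw [hC]; exact Submodule.subset_span ⟨j, hj, rfl⟩
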